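/- With A_1,...,A_n the anticommuting self-adjoint matrices from Pauli constructions, the operator norm of Σ_{i=1}^n A_i ⊗ A_i in M_{2^n}(ℂ) ⊗ M_{2^n}(ℂ) ≅ M_{4^n}(ℂ) is at least n. Consequently the completely bounded norm of the map φ(e_i) = (1/√n) A_i from ℓ_∞^n to M_{2^n}(ℂ) is at least √n. -/

import Mathlib

open scoped Matrix Kronecker BigOperators

noncomputable def opNorm {ι : Type*} [Fintype ι] [DecidableEq ι] (A : Matrix ι ι ℂ) : ℝ :=
  ‖Matrix.toEuclideanCLM (𝕜 := ℂ) A‖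

def pauliX : Matrix (Fin 2) (Fin 2) ℂ := !![0, 1; 1, 0]

def pauliZ : Matrix (Fin 2) (Fin 2) ℂ := !![1, 0; 0, -1]

noncomputable def pauliOp (n : ℕ) (k : Fin n) :
    Matrix (Fin n → Fin 2) (Fin n → Fin 2) ℂ :=
  Matrix.of fun f g => ∏ j : Fin n,
    (if j < k then pauliZ else if j = k then pauliX else 1) (f j) (g j)

/-- The completely bounded norm of a linear map `φ : ℓ_∞^n → M_d(ℂ)` (here `d` is replaced by
an arbitrary finite index type `ι`): the supremum over `k` of the norms of the amplifications
`id_{M_k} ⊗ φ : M_k(ℓ_∞^n) → M_k(M_d)`, where a matrix `B ∈ M_k(ℓ_∞^n)` has norm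
`sup_i ‖(B_{rs}(i))_{rs}‖`. -/
noncomputable def cbNorm {n : ℕ} {ι : Type*} [Fintype ι] [DecidableEq ι]
    (φ : (Fin n → ℂ) →ₗ[ℂ] Matrix ι ι ℂ) : ℝ :=
  ⨆ k : ℕ, sSup {r : ℝ | ∃ B : Matrix (Fin k) (Fin k) (Fin n → ℂ),
    (∀ i : Fin n, opNorm (Matrix.of fun p q => B p q i) ≤ 1) ∧
    r = opNorm (Matrix.of fun p q : Fin k × ι => φ (B p.1 q.1) p.2 q.2)}


open Matrix
set_option synthInstance.maxHeartbeats 400000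
set_option maxHeartbeats 1000000

lemma opNorm_ge_of_eig {ι : Type*} [Fintype ι] [DecidableEq ι] (M : Matrix ι ι ℂ) (c : ℝ)
    (v : ι → ℂ) (hv : v ≠ 0) (h : M *ᵥ v = (c : ℂ) • v) : |c| ≤ opNorm M := by
  set z : EuclideanSpace ℂ ι := (WithLp.equiv 2 _).symm v with hz
  have hzne : z ≠ 0 := by
    simpa [hz] using hv
  have h1 : Matrix.toEuclideanCLM (𝕜 := ℂ) M z = (c : ℂ) • z := by
    rw [hz, WithLp.equiv_symm_apply, Matrix.toEuclideanCLM_toLp, h]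
    rfl
  have h2 := (Matrix.toEuclideanCLM (𝕜 := ℂ) M).le_opNorm z
  rw [h1, norm_smul] at h2
  have hc : ‖(c : ℂ)‖ = |c| := by
    rw [Complex.norm_real]; rfl
  rw [hc] at h2
  have hzpos : 0 < ‖z‖ := norm_pos_iff.mpr hzne
  exact le_of_mul_le_mul_right h2 hzpos

lemma opNorm_of_unitary {ι : Type*} [Fintype ι] [DecidableEq ι] [Nonempty ι]
    (M : Matrix ι ι ℂ) (h : Mᴴ * M = 1) : opNorm M = 1 := by
  set T := Matrix.toEuclideanCLM (𝕜 := ℂ) M with hT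
  have hstar : star T * T = 1 := by
    rw [hT, ← map_star, ← _root_.map_mul, Matrix.star_eq_conjTranspose, h, _root_.map_one]
  have hn : ‖T‖ * ‖T‖ = 1 := by
    rw [← CStarRing.norm_star_mul_self, hstar, norm_one]
  have := mul_self_eq_one_iff.mp hn
  rcases this with h1 | h1
  · exact h1
  · exfalso; have := norm_nonneg T; rw [h1] at this; linarith

lemma euc_norm_sq {ι : Type*} [Fintype ι] (y : ι → ℂ) :
    ‖((WithLp.equiv 2 (ι → ℂ)).symm y : EuclideanSpace ℂ ι)‖ ^ 2 = ∑ i, ‖y i‖ ^ 2 := by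
  rw [EuclideanSpace.norm_eq, Real.sq_sqrt (by positivity)]
  rfl

lemma opNorm_mulVec_sq {ι : Type*} [Fintype ι] [DecidableEq ι] (X : Matrix ι ι ℂ) (y : ι → ℂ) :
    ∑ p, ‖(X *ᵥ y) p‖ ^ 2 ≤ opNorm X ^ 2 * ∑ q, ‖y q‖ ^ 2 := by
  have h1 : Matrix.toEuclideanCLM (𝕜 := ℂ) X ((WithLp.equiv 2 (ι → ℂ)).symm y)
      = (WithLp.equiv 2 (ι → ℂ)).symm (X *ᵥ y) := by
    rw [WithLp.equiv_symm_apply, Matrix.toEuclideanCLM_toLp]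
  have h2 := (Matrix.toEuclideanCLM (𝕜 := ℂ) X).le_opNorm ((WithLp.equiv 2 (ι → ℂ)).symm y)
  rw [h1] at h2
  have h3 := pow_le_pow_left₀ (norm_nonneg _) h2 2
  rw [mul_pow, euc_norm_sq, euc_norm_sq] at h3
  exact h3

lemma opNorm_kron_one {ι κ : Type*} [Fintype ι] [DecidableEq ι] [Fintype κ] [DecidableEq κ]
    (X : Matrix ι ι ℂ) :
    opNorm (X ⊗ₖ (1 : Matrix κ κ ℂ)) ≤ opNorm X := by
  apply ContinuousLinearMap.opNorm_le_bound _ (norm_nonneg _)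
  intro v
  set u : ι × κ → ℂ := WithLp.equiv 2 _ v with hu
  have hv : v = (WithLp.equiv 2 (ι × κ → ℂ)).symm u := rfl
  rw [hv, WithLp.equiv_symm_apply, Matrix.toEuclideanCLM_toLp]
  have key : ∀ g : κ, ∀ p : ι,
      ((X ⊗ₖ (1 : Matrix κ κ ℂ)) *ᵥ u) (p, g) = (X *ᵥ fun q => u (q, g)) p := by
    intro g p
    simp only [Matrix.mulVec, dotProduct, Fintype.sum_prod_type,
      Matrix.kroneckerMap_apply]
    refine Finset.sum_congr rfl fun q _ => ?_
    rw [Finset.sum_eq_single g]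
    · simp [Matrix.one_apply]
    · intro h _ hh; simp [Matrix.one_apply_ne (Ne.symm hh)]
    · intro hg; exact absurd (Finset.mem_univ g) hg
  have hXv : 0 ≤ opNorm X * ‖v‖ :=
    mul_nonneg (norm_nonneg (Matrix.toEuclideanCLM (𝕜 := ℂ) X)) (norm_nonneg _)
  have hle : ‖((WithLp.equiv 2 (ι × κ → ℂ)).symm ((X ⊗ₖ (1 : Matrix κ κ ℂ)) *ᵥ u) :
      EuclideanSpace ℂ (ι × κ))‖ ^ 2 ≤ (opNorm X * ‖v‖) ^ 2 := by
    rw [euc_norm_sq]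
    have e1 : ∑ i : ι × κ, ‖((X ⊗ₖ (1 : Matrix κ κ ℂ)) *ᵥ u) i‖ ^ 2
        = ∑ g : κ, ∑ p : ι, ‖(X *ᵥ fun q => u (q, g)) p‖ ^ 2 := by
      rw [Fintype.sum_prod_type, Finset.sum_comm]
      exact Finset.sum_congr rfl fun g _ => Finset.sum_congr rfl fun p _ => by rw [key]
    rw [e1]
    calc ∑ g : κ, ∑ p : ι, ‖(X *ᵥ fun q => u (q, g)) p‖ ^ 2
        ≤ ∑ g : κ, opNorm X ^ 2 * ∑ q : ι, ‖u (q, g)‖ ^ 2 :=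
          Finset.sum_le_sum fun g _ => opNorm_mulVec_sq X _
      _ = opNorm X ^ 2 * ∑ g : κ, ∑ q : ι, ‖u (q, g)‖ ^ 2 := by rw [Finset.mul_sum]
      _ = (opNorm X * ‖v‖) ^ 2 := by
          rw [mul_pow]
          congr 1
          have : ‖v‖ ^ 2 = ∑ i : ι × κ, ‖u i‖ ^ 2 := by rw [hv, euc_norm_sq]
          rw [this, Fintype.sum_prod_type, Finset.sum_comm]
  have h4 := Real.sqrt_le_sqrt hle
  rwa [Real.sqrt_sq (norm_nonneg _), Real.sqrt_sq hXv] at h4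

lemma opNorm_one_kron {ι κ : Type*} [Fintype ι] [DecidableEq ι] [Fintype κ] [DecidableEq κ]
    (Y : Matrix κ κ ℂ) :
    opNorm ((1 : Matrix ι ι ℂ) ⊗ₖ Y) ≤ opNorm Y := by
  apply ContinuousLinearMap.opNorm_le_bound _ (norm_nonneg _)
  intro v
  set u : ι × κ → ℂ := WithLp.equiv 2 _ v with hu
  have hv : v = (WithLp.equiv 2 (ι × κ → ℂ)).symm u := rfl
  rw [hv, WithLp.equiv_symm_apply, Matrix.toEuclideanCLM_toLp]
  have key : ∀ p : ι, ∀ g : κ,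
      (((1 : Matrix ι ι ℂ) ⊗ₖ Y) *ᵥ u) (p, g) = (Y *ᵥ fun h => u (p, h)) g := by
    intro p g
    simp only [Matrix.mulVec, dotProduct, Fintype.sum_prod_type,
      Matrix.kroneckerMap_apply]
    rw [Finset.sum_eq_single p]
    · simp [Matrix.one_apply]
    · intro q _ hq; simp [Matrix.one_apply_ne (Ne.symm hq)]
    · intro hp; exact absurd (Finset.mem_univ p) hp
  have hYv : 0 ≤ opNorm Y * ‖v‖ :=
    mul_nonneg (norm_nonneg (Matrix.toEuclideanCLM (𝕜 := ℂ) Y)) (norm_nonneg _)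
  have hle : ‖((WithLp.equiv 2 (ι × κ → ℂ)).symm (((1 : Matrix ι ι ℂ) ⊗ₖ Y) *ᵥ u) :
      EuclideanSpace ℂ (ι × κ))‖ ^ 2 ≤ (opNorm Y * ‖v‖) ^ 2 := by
    rw [euc_norm_sq]
    have e1 : ∑ i : ι × κ, ‖(((1 : Matrix ι ι ℂ) ⊗ₖ Y) *ᵥ u) i‖ ^ 2
        = ∑ p : ι, ∑ g : κ, ‖(Y *ᵥ fun h => u (p, h)) g‖ ^ 2 := by
      rw [Fintype.sum_prod_type]
      exact Finset.sum_congr rfl fun p _ => Finset.sum_congr rfl fun g _ => by rw [key]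
    rw [e1]
    calc ∑ p : ι, ∑ g : κ, ‖(Y *ᵥ fun h => u (p, h)) g‖ ^ 2
        ≤ ∑ p : ι, opNorm Y ^ 2 * ∑ h : κ, ‖u (p, h)‖ ^ 2 :=
          Finset.sum_le_sum fun p _ => opNorm_mulVec_sq Y _
      _ = opNorm Y ^ 2 * ∑ p : ι, ∑ h : κ, ‖u (p, h)‖ ^ 2 := by rw [Finset.mul_sum]
      _ = (opNorm Y * ‖v‖) ^ 2 := by
          rw [mul_pow]
          congr 1
          have : ‖v‖ ^ 2 = ∑ i : ι × κ, ‖u i‖ ^ 2 := by rw [hv, euc_norm_sq]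
          rw [this, Fintype.sum_prod_type]
  have h4 := Real.sqrt_le_sqrt hle
  rwa [Real.sqrt_sq (norm_nonneg _), Real.sqrt_sq hYv] at h4

lemma opNorm_mul_le {ι : Type*} [Fintype ι] [DecidableEq ι] (A B : Matrix ι ι ℂ) :
    opNorm (A * B) ≤ opNorm A * opNorm B := by
  unfold opNorm
  rw [_root_.map_mul]
  exact norm_mul_le _ _

lemma opNorm_kron {ι κ : Type*} [Fintype ι] [DecidableEq ι] [Fintype κ] [DecidableEq κ]
    (X : Matrix ι ι ℂ) (Y : Matrix κ κ ℂ) :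
    opNorm (X ⊗ₖ Y) ≤ opNorm X * opNorm Y := by
  have : X ⊗ₖ Y = (X ⊗ₖ (1 : Matrix κ κ ℂ)) * ((1 : Matrix ι ι ℂ) ⊗ₖ Y) := by
    rw [← Matrix.mul_kronecker_mul, mul_one, one_mul]
  rw [this]
  calc opNorm ((X ⊗ₖ (1 : Matrix κ κ ℂ)) * ((1 : Matrix ι ι ℂ) ⊗ₖ Y))
      ≤ opNorm (X ⊗ₖ (1 : Matrix κ κ ℂ)) * opNorm ((1 : Matrix ι ι ℂ) ⊗ₖ Y) :=
        opNorm_mul_le _ _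
    _ ≤ opNorm X * opNorm Y := by
        apply mul_le_mul (opNorm_kron_one X) (opNorm_one_kron Y) (norm_nonneg _)
          (norm_nonneg _)

lemma opNorm_smul {ι : Type*} [Fintype ι] [DecidableEq ι] (c : ℂ) (M : Matrix ι ι ℂ) :
    opNorm (c • M) = ‖c‖ * opNorm M := by
  unfold opNorm
  rw [_root_.map_smul]
  exact norm_smul c (Matrix.toEuclideanCLM (𝕜 := ℂ) M)

lemma opNorm_sum_le {ι α : Type*} [Fintype ι] [DecidableEq ι] (s : Finset α)
    (M : α → Matrix ι ι ℂ) : opNorm (∑ i ∈ s, M i) ≤ ∑ i ∈ s, opNorm (M i) := by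
  unfold opNorm
  rw [map_sum]
  exact norm_sum_le _ _



noncomputable def pfac (n : ℕ) (k j : Fin n) : Matrix (Fin 2) (Fin 2) ℂ :=
  if j < k then pauliZ else if j = k then pauliX else 1

lemma pauliOp_eq (n : ℕ) (k : Fin n) (f g : Fin n → Fin 2) :
    pauliOp n k f g = ∏ j : Fin n, pfac n k j (f j) (g j) := rfl

lemma pfac_cases (n : ℕ) (k j : Fin n) :
    pfac n k j = pauliZ ∨ pfac n k j = pauliX ∨ pfac n k j = 1 := by
  unfold pfac; split_ifs <;> tauto

lemma pfac_mul_self (n : ℕ) (k j : Fin n) (a b : Fin 2) :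
    ∑ x : Fin 2, pfac n k j a x * pfac n k j x b = (1 : Matrix (Fin 2) (Fin 2) ℂ) a b := by
  rcases pfac_cases n k j with h | h | h <;> rw [h] <;> fin_cases a <;> fin_cases b <;>
    simp [pauliX, pauliZ, Fin.sum_univ_two, Matrix.one_apply]

lemma pfac_star (n : ℕ) (k j : Fin n) (a b : Fin 2) :
    star (pfac n k j a b) = pfac n k j b a := by
  rcases pfac_cases n k j with h | h | h <;> rw [h] <;> fin_cases a <;> fin_cases b <;>
    simp [pauliX, pauliZ, Matrix.one_apply]

lemma pfac_symm (n : ℕ) (k j : Fin n) (a b : Fin 2) :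
    pfac n k j a b = pfac n k j b a := by
  rcases pfac_cases n k j with h | h | h <;> rw [h] <;> fin_cases a <;> fin_cases b <;>
    simp [pauliX, pauliZ, Matrix.one_apply]

lemma pauliOp_symm (n : ℕ) (k : Fin n) (f g : Fin n → Fin 2) :
    pauliOp n k f g = pauliOp n k g f := by
  rw [pauliOp_eq, pauliOp_eq]
  exact Finset.prod_congr rfl fun j _ => pfac_symm n k j (f j) (g j)

lemma pauliOp_conjTranspose (n : ℕ) (k : Fin n) : (pauliOp n k)ᴴ = pauliOp n k := by
  ext f g
  rw [Matrix.conjTranspose_apply, pauliOp_eq, pauliOp_eq, star_prod]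
  exact Finset.prod_congr rfl fun j _ => pfac_star n k j (g j) (f j)

lemma pauliOp_mul_self (n : ℕ) (k : Fin n) : pauliOp n k * pauliOp n k = 1 := by
  ext f g
  rw [Matrix.mul_apply]
  have : ∀ h : Fin n → Fin 2, pauliOp n k f h * pauliOp n k h g
      = ∏ j : Fin n, (pfac n k j (f j) (h j) * pfac n k j (h j) (g j)) := by
    intro h; rw [pauliOp_eq, pauliOp_eq, ← Finset.prod_mul_distrib]
  simp_rw [this]
  rw [← Fintype.prod_sum (fun j x => pfac n k j (f j) x * pfac n k j x (g j))]
  simp_rw [pfac_mul_self]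
  by_cases hfg : f = g
  · subst hfg; simp [Matrix.one_apply]
  · obtain ⟨j, hj⟩ : ∃ j, f j ≠ g j := by
      by_contra hcon; push_neg at hcon; exact hfg (funext hcon)
    rw [Matrix.one_apply_ne hfg]
    exact Finset.prod_eq_zero (Finset.mem_univ j) (Matrix.one_apply_ne hj)

lemma kron_mulVec_diag {n : ℕ} {σ : Type*} [Fintype σ] [DecidableEq σ]
    (e : σ ≃ (Fin n → Fin 2)) (i : Fin n) :
    (((pauliOp n i).submatrix e e) ⊗ₖ pauliOp n i) *ᵥ
      (fun p : σ × (Fin n → Fin 2) => if e p.1 = p.2 then 1 else 0)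
    = fun p => if e p.1 = p.2 then 1 else 0 := by
  funext pg
  obtain ⟨p, g⟩ := pg
  simp only [Matrix.mulVec, dotProduct, Fintype.sum_prod_type,
    Matrix.kroneckerMap_apply, Matrix.submatrix_apply, mul_ite, mul_one, mul_zero]
  have e1 : ∀ q : σ, (∑ h : Fin n → Fin 2,
      if e q = h then pauliOp n i (e p) (e q) * pauliOp n i g h else 0)
      = pauliOp n i (e p) (e q) * pauliOp n i (e q) g := by
    intro q
    rw [Finset.sum_ite_eq]
    simp [pauliOp_symm n i g (e q)]
  simp_rw [e1]
  rw [Equiv.sum_comp e (fun f => pauliOp n i (e p) f * pauliOp n i f g)]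
  have : ∑ f : Fin n → Fin 2, pauliOp n i (e p) f * pauliOp n i f g
      = (pauliOp n i * pauliOp n i) (e p) g := (Matrix.mul_apply).symm
  rw [this, pauliOp_mul_self, Matrix.one_apply]

lemma sum_kron_mulVec {n : ℕ} {σ : Type*} [Fintype σ] [DecidableEq σ]
    (e : σ ≃ (Fin n → Fin 2)) :
    (∑ i, ((pauliOp n i).submatrix e e) ⊗ₖ pauliOp n i) *ᵥ
      (fun p : σ × (Fin n → Fin 2) => if e p.1 = p.2 then 1 else 0)
    = (n : ℂ) • (fun p : σ × (Fin n → Fin 2) => if e p.1 = p.2 then (1 : ℂ) else 0) := by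
  have hsum : ∀ (v : σ × (Fin n → Fin 2) → ℂ),
      (∑ i, ((pauliOp n i).submatrix e e) ⊗ₖ pauliOp n i) *ᵥ v
      = ∑ i, (((pauliOp n i).submatrix e e) ⊗ₖ pauliOp n i) *ᵥ v := by
    intro v
    funext x
    simp only [Matrix.mulVec, dotProduct, Matrix.sum_apply, Finset.sum_mul,
      Finset.sum_apply]
    exact Finset.sum_comm
  rw [hsum]
  simp_rw [kron_mulVec_diag e]
  rw [Finset.sum_const, Finset.card_univ, Fintype.card_fin]
  rw [← Nat.cast_smul_eq_nsmul ℂ]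

lemma diag_ne_zero {n : ℕ} {σ : Type*} [Fintype σ] [DecidableEq σ]
    (e : σ ≃ (Fin n → Fin 2)) :
    (fun p : σ × (Fin n → Fin 2) => if e p.1 = p.2 then (1 : ℂ) else 0) ≠ 0 := by
  intro h
  have p0 : σ := e.symm (fun _ => 0)
  have := congrFun h (p0, e p0)
  simp at this

lemma vec_expand {n : ℕ} (v : Fin n → ℂ) : v = ∑ i, v i • (Pi.single i (1 : ℂ) : Fin n → ℂ) := by
  rw [← Finset.univ_sum_single v]
  refine Finset.sum_congr rfl fun i _ => ?_
  funext j
  rcases eq_or_ne j i with h | h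
  · subst h; simp
  · simp [Pi.single_apply, h]

lemma phi_expand {n k : ℕ} (φ : (Fin n → ℂ) →ₗ[ℂ] Matrix (Fin n → Fin 2) (Fin n → Fin 2) ℂ)
    (hφ : ∀ i, φ (Pi.single i 1) = ((Real.sqrt n)⁻¹ : ℂ) • pauliOp n i)
    (B : Matrix (Fin k) (Fin k) (Fin n → ℂ)) :
    (Matrix.of fun p q : Fin k × (Fin n → Fin 2) => φ (B p.1 q.1) p.2 q.2)
    = ∑ i, ((Real.sqrt n)⁻¹ : ℂ) • ((Matrix.of fun p q => B p q i) ⊗ₖ pauliOp n i) := by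
  ext ⟨p1, p2⟩ ⟨q1, q2⟩
  rw [Matrix.of_apply]
  have hB : φ (B p1 q1) = ∑ i, (B p1 q1 i) • (((Real.sqrt n)⁻¹ : ℂ) • pauliOp n i) := by
    conv_lhs => rw [vec_expand (B p1 q1)]
    rw [map_sum]
    exact Finset.sum_congr rfl fun i _ => by rw [_root_.map_smul, hφ]
  rw [hB]
  simp only [Matrix.sum_apply, Matrix.smul_apply, Matrix.kroneckerMap_apply, Matrix.of_apply,
    smul_eq_mul]
  try exact Finset.sum_congr rfl fun i _ => by ring

lemma pauli_submatrix_unitary {n : ℕ} {σ : Type*} [Fintype σ] [DecidableEq σ]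
    (e : σ ≃ (Fin n → Fin 2)) (i : Fin n) :
    opNorm ((pauliOp n i).submatrix e e) = 1 := by
  have : Nonempty σ := ⟨e.symm (fun _ => 0)⟩
  apply opNorm_of_unitary
  rw [Matrix.conjTranspose_submatrix, pauliOp_conjTranspose, Matrix.submatrix_mul_equiv,
    pauliOp_mul_self, Matrix.submatrix_one_equiv]

lemma sqrt_inv_mul {n : ℕ} : (Real.sqrt n)⁻¹ * n = Real.sqrt n := by
  rcases Nat.eq_zero_or_pos n with h | h
  · subst h; simp
  · have h0 : (0 : ℝ) < Real.sqrt n := Real.sqrt_pos.mpr (by positivity)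
    field_simp
    rw [Real.sq_sqrt (Nat.cast_nonneg _)]

lemma amp_le {n k : ℕ} (φ : (Fin n → ℂ) →ₗ[ℂ] Matrix (Fin n → Fin 2) (Fin n → Fin 2) ℂ)
    (hφ : ∀ i, φ (Pi.single i 1) = ((Real.sqrt n)⁻¹ : ℂ) • pauliOp n i)
    (B : Matrix (Fin k) (Fin k) (Fin n → ℂ))
    (hB : ∀ i : Fin n, opNorm (Matrix.of fun p q => B p q i) ≤ 1) :
    opNorm (Matrix.of fun p q : Fin k × (Fin n → Fin 2) => φ (B p.1 q.1) p.2 q.2)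
      ≤ Real.sqrt n := by
  rw [phi_expand φ hφ B]
  calc opNorm (∑ i, ((Real.sqrt n)⁻¹ : ℂ) • ((Matrix.of fun p q => B p q i) ⊗ₖ pauliOp n i))
      ≤ ∑ i, opNorm (((Real.sqrt n)⁻¹ : ℂ) • ((Matrix.of fun p q => B p q i) ⊗ₖ pauliOp n i)) :=
        opNorm_sum_le _ _
    _ ≤ ∑ _i : Fin n, (Real.sqrt n)⁻¹ := by
        refine Finset.sum_le_sum fun i _ => ?_
        rw [opNorm_smul]
        have hnc : ‖((Real.sqrt n)⁻¹ : ℂ)‖ = (Real.sqrt n)⁻¹ := by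
          rw [show ((Real.sqrt n)⁻¹ : ℂ) = (((Real.sqrt n)⁻¹ : ℝ) : ℂ) by push_cast; ring,
            Complex.norm_real, Real.norm_eq_abs, abs_of_nonneg (by positivity)]
        rw [hnc]
        have hk : opNorm ((Matrix.of fun p q => B p q i) ⊗ₖ pauliOp n i) ≤ 1 := by
          calc opNorm ((Matrix.of fun p q => B p q i) ⊗ₖ pauliOp n i)
              ≤ opNorm (Matrix.of fun p q => B p q i) * opNorm (pauliOp n i) :=
                opNorm_kron _ _
            _ ≤ 1 * 1 := by
                apply mul_le_mul (hB i) _ (norm_nonneg _) zero_le_one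
                have := pauli_submatrix_unitary (Equiv.refl (Fin n → Fin 2)) i
                rw [show (pauliOp n i).submatrix (Equiv.refl _) (Equiv.refl _) = pauliOp n i by
                  simp [Matrix.submatrix_id_id]] at this
                exact this.le
            _ = 1 := one_mul 1
        calc (Real.sqrt n)⁻¹ * opNorm ((Matrix.of fun p q => B p q i) ⊗ₖ pauliOp n i)
            ≤ (Real.sqrt n)⁻¹ * 1 := by
              apply mul_le_mul_of_nonneg_left hk (by positivity)
          _ = (Real.sqrt n)⁻¹ := mul_one _
    _ = Real.sqrt n := by
        rw [Finset.sum_const, Finset.card_univ, Fintype.card_fin, nsmul_eq_mul, mul_comm,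
          sqrt_inv_mul]

lemma opNorm_zero {ι : Type*} [Fintype ι] [DecidableEq ι] :
    opNorm (0 : Matrix ι ι ℂ) = 0 := by
  unfold opNorm
  rw [map_zero, norm_zero]


/-- With `A_1, ..., A_n` the anticommuting self-adjoint Pauli-built matrices, the operator norm
of `∑ i, A_i ⊗ A_i` is at least `n`; consequently the completely bounded norm of the map
`φ(e_i) = (1/√n) A_i` from `ℓ_∞^n` to `M_{2^n}(ℂ)` is at least `√n`. -/
theorem stmt3 (n : ℕ)
    (φ : (Fin n → ℂ) →ₗ[ℂ] Matrix (Fin n → Fin 2) (Fin n → Fin 2) ℂ)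
    (hφ : ∀ i, φ (Pi.single i 1) = ((Real.sqrt n)⁻¹ : ℂ) • pauliOp n i) :
    (n : ℝ) ≤ opNorm (∑ i, pauliOp n i ⊗ₖ pauliOp n i) ∧
    Real.sqrt n ≤ cbNorm φ := by
  constructor
  · have h := sum_kron_mulVec (Equiv.refl (Fin n → Fin 2))
    have hrw : (∑ i, ((pauliOp n i).submatrix (Equiv.refl (Fin n → Fin 2))
          (Equiv.refl (Fin n → Fin 2))) ⊗ₖ pauliOp n i)
        = ∑ i, pauliOp n i ⊗ₖ pauliOp n i := by
      refine Finset.sum_congr rfl fun i _ => ?_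
      rw [Equiv.coe_refl, Matrix.submatrix_id_id]
    rw [hrw] at h
    have h2 : (∑ i, pauliOp n i ⊗ₖ pauliOp n i) *ᵥ
        (fun p : (Fin n → Fin 2) × (Fin n → Fin 2) =>
          if (Equiv.refl (Fin n → Fin 2)) p.1 = p.2 then (1 : ℂ) else 0)
        = (((n : ℝ) : ℂ)) • (fun p : (Fin n → Fin 2) × (Fin n → Fin 2) =>
          if (Equiv.refl (Fin n → Fin 2)) p.1 = p.2 then (1 : ℂ) else 0) := by
      rw [h]; norm_cast
    have h3 := opNorm_ge_of_eig _ (n : ℝ) _ (diag_ne_zero (Equiv.refl (Fin n → Fin 2))) h2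
    rwa [abs_of_nonneg (Nat.cast_nonneg n)] at h3
  · set k0 := Fintype.card (Fin n → Fin 2) with hk0
    set e : Fin k0 ≃ (Fin n → Fin 2) := (Fintype.equivFin (Fin n → Fin 2)).symm with he
    set B : Matrix (Fin k0) (Fin k0) (Fin n → ℂ) :=
      Matrix.of fun p q => fun i => pauliOp n i (e p) (e q) with hBdef
    have hBsub : ∀ i : Fin n,
        (Matrix.of fun p q => B p q i) = (pauliOp n i).submatrix e e := fun i => rfl
    have hBc : ∀ i : Fin n, opNorm (Matrix.of fun p q => B p q i) ≤ 1 := by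
      intro i
      rw [hBsub i, pauli_submatrix_unitary e i]
    have heig : (Matrix.of fun p q : Fin k0 × (Fin n → Fin 2) => φ (B p.1 q.1) p.2 q.2) *ᵥ
        (fun p : Fin k0 × (Fin n → Fin 2) => if e p.1 = p.2 then (1 : ℂ) else 0)
        = ((Real.sqrt n : ℝ) : ℂ) •
          (fun p : Fin k0 × (Fin n → Fin 2) => if e p.1 = p.2 then (1 : ℂ) else 0) := by
      rw [phi_expand φ hφ B]
      simp_rw [hBsub]
      rw [← Finset.smul_sum, Matrix.smul_mulVec, sum_kron_mulVec e, smul_smul]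
      congr 1
      have hr : ((Real.sqrt n)⁻¹ : ℝ) * (n : ℝ) = Real.sqrt n := sqrt_inv_mul
      calc ((Real.sqrt n)⁻¹ : ℂ) * (n : ℂ) = ((((Real.sqrt n)⁻¹ : ℝ) * (n : ℝ) : ℝ) : ℂ) := by
            push_cast; ring
        _ = ((Real.sqrt n : ℝ) : ℂ) := by rw [hr]
    have hval : Real.sqrt n ≤
        opNorm (Matrix.of fun p q : Fin k0 × (Fin n → Fin 2) => φ (B p.1 q.1) p.2 q.2) := by
      have h3 := opNorm_ge_of_eig _ (Real.sqrt n) _ (diag_ne_zero e) heig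
      rwa [abs_of_nonneg (Real.sqrt_nonneg _)] at h3
    set S : ℕ → Set ℝ := fun k => {r : ℝ | ∃ B : Matrix (Fin k) (Fin k) (Fin n → ℂ),
      (∀ i : Fin n, opNorm (Matrix.of fun p q => B p q i) ≤ 1) ∧
      r = opNorm (Matrix.of fun p q : Fin k × (Fin n → Fin 2) => φ (B p.1 q.1) p.2 q.2)}
      with hSdef
    have hcb : cbNorm φ = ⨆ k : ℕ, sSup (S k) := rfl
    have hub : ∀ k : ℕ, ∀ r ∈ S k, r ≤ Real.sqrt n := by
      rintro k r ⟨B', hB', rfl⟩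
      exact amp_le φ hφ B' hB'
    have hne : ∀ k : ℕ, (S k).Nonempty := by
      intro k
      refine ⟨_, (0 : Matrix (Fin k) (Fin k) (Fin n → ℂ)), fun i => ?_, rfl⟩
      have hz : (Matrix.of fun p q => (0 : Matrix (Fin k) (Fin k) (Fin n → ℂ)) p q i)
          = (0 : Matrix (Fin k) (Fin k) ℂ) := rfl
      rw [hz, opNorm_zero]
      exact zero_le_one
    have hmem : opNorm (Matrix.of fun p q : Fin k0 × (Fin n → Fin 2) =>
        φ (B p.1 q.1) p.2 q.2) ∈ S k0 := ⟨B, hBc, rfl⟩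
    have h1 : Real.sqrt n ≤ sSup (S k0) :=
      le_trans hval (le_csSup ⟨Real.sqrt n, fun r hr => hub k0 r hr⟩ hmem)
    rw [hcb]
    refine le_trans h1 (le_ciSup (f := fun k => sSup (S k)) ?_ k0)
    refine ⟨Real.sqrt n, ?_⟩
    rintro x ⟨k, rfl⟩
    exact csSup_le (hne k) (hub k)
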